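/- Compression is compatible with concatenation up to merging equal boundary letters: if X is a compressed version of Y and X' is a compressed version of Y', then C(X, X') is a compressed version of YY', where C(X, X') = X ++ X' if the last letter of X differs from the first letter of X', and C(X, X') = A ++ X' if X = A·a and X' = a·B share boundary letter a. -/

import Mathlib

/-- `X` is a compressed version of `Y`. -/
def IsCompression {α : Type*} (X Y : List α) : Prop :=
  X.Chain' (· ≠ ·) ∧
  ∃ f : Fin Y.length → Fin X.length,
    Function.Surjective f ∧
    (∀ h : 0 < Y.length, (f ⟨0, h⟩ : ℕ) = 0) ∧
    (∀ (k : ℕ) (h : k + 1 < Y.length),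
      (f ⟨k + 1, h⟩ : ℕ) = f ⟨k, Nat.lt_of_succ_lt h⟩ ∨
      (f ⟨k + 1, h⟩ : ℕ) = f ⟨k, Nat.lt_of_succ_lt h⟩ + 1) ∧
    (∀ k : Fin Y.length, Y.get k = X.get (f k))

/-- The buffer-combining function: concatenate, merging equal boundary letters. -/
def combine {α : Type*} [DecidableEq α] (X X' : List α) : List α :=
  match X.getLast?, X'.head? with
  | some a, some b => if a = b then X.dropLast ++ X' else X ++ X'
  | _, _ => X ++ X'

/-- Nat-valued reformulation of `IsCompression`. -/
def NatCompression {α : Type*} (X Y : List α) : Prop :=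
  X.Chain' (· ≠ ·) ∧
  ∃ f : ℕ → ℕ,
    f 0 = 0 ∧
    (∀ k, k + 1 < Y.length → f (k + 1) = f k ∨ f (k + 1) = f k + 1) ∧
    (∀ j < X.length, ∃ k < Y.length, f k = j) ∧
    (∀ k (h : k < Y.length), ∃ hj : f k < X.length, Y[k] = X[f k])

theorem isCompression_iff_nat {α : Type*} (X Y : List α) :
    IsCompression X Y ↔ NatCompression X Y := by
  constructor
  · rintro ⟨hc, f, hsur, h0, hstep, hget⟩
    refine ⟨hc, fun k => if h : k < Y.length then (f ⟨k, h⟩ : ℕ) else 0, ?_, ?_, ?_, ?_⟩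
    · by_cases h : 0 < Y.length
      · simpa [h] using h0 h
      · simp [h]
    · intro k hk
      have hk' : k < Y.length := Nat.lt_of_succ_lt hk
      simpa [hk, hk'] using hstep k hk
    · intro j hj
      obtain ⟨k, hk⟩ := hsur ⟨j, hj⟩
      exact ⟨k, k.isLt, by simp [k.isLt, hk, Fin.eta]⟩
    · intro k h
      refine ⟨by simp [h], ?_⟩
      simpa [h, List.get_eq_getElem] using hget ⟨k, h⟩
  · rintro ⟨hc, f, h0, hstep, hsur, hget⟩
    refine ⟨hc, fun k => ⟨f k, (hget k k.isLt).choose⟩, ?_, ?_, ?_, ?_⟩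
    · intro j
      obtain ⟨k, hk, hfk⟩ := hsur j j.isLt
      exact ⟨⟨k, hk⟩, by ext; simpa using hfk⟩
    · intro h; simpa using h0
    · intro k h
      exact hstep k h
    · intro k
      simpa [List.get_eq_getElem] using (hget (k : ℕ) k.isLt).choose_spec

theorem natstep_mono {n : ℕ} (f : ℕ → ℕ)
    (hstep : ∀ k, k + 1 < n → f (k + 1) = f k ∨ f (k + 1) = f k + 1) :
    ∀ k l, k ≤ l → l < n → f k ≤ f l := by
  intro k l hkl hl
  induction l with
  | zero => obtain rfl : k = 0 := Nat.le_zero.mp hkl; exact le_rfl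
  | succ l ih =>
    rcases Nat.eq_or_lt_of_le hkl with rfl | h1
    · exact le_rfl
    · have := ih (Nat.lt_succ_iff.mp h1) (Nat.lt_of_succ_lt hl)
      rcases hstep l hl with h2 | h2 <;> omega

theorem natstep_last {n m : ℕ} (f : ℕ → ℕ)
    (hstep : ∀ k, k + 1 < n → f (k + 1) = f k ∨ f (k + 1) = f k + 1)
    (hsur : ∀ j < m, ∃ k < n, f k = j)
    (hb : ∀ k < n, f k < m)
    (hn : 0 < n) (hm : 0 < m) : f (n - 1) = m - 1 := by
  obtain ⟨k, hk, hfk⟩ := hsur (m - 1) (by omega)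
  have h1 := natstep_mono f hstep k (n - 1) (by omega) (by omega)
  have h2 := hb (n - 1) (by omega)
  omega

theorem combine_nil_right {α : Type*} [DecidableEq α] (X : List α) : combine X [] = X := by
  unfold combine
  rcases h : X.getLast? with _ | x <;> simp [h]

theorem combine_nil_left {α : Type*} [DecidableEq α] (X' : List α) : combine [] X' = X' := by
  unfold combine
  simp

theorem combine_of_ne_nil {α : Type*} [DecidableEq α] (X X' : List α)
    (hX : X ≠ []) (hX' : X' ≠ []) :
    combine X X' =
      if X.getLast hX = X'.head hX' then X.dropLast ++ X' else X ++ X' := by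
  unfold combine
  rw [List.getLast?_eq_getLast hX, List.head?_eq_head hX']

theorem compression_combine {α : Type*} [DecidableEq α]
    (X Y X' Y' : List α) (h : IsCompression X Y) (h' : IsCompression X' Y') :
    IsCompression (combine X X') (Y ++ Y') := by
  rw [isCompression_iff_nat] at h h' ⊢
  obtain ⟨hc, f, h0, hstep, hsur, hget⟩ := h
  obtain ⟨hc', f', h0', hstep', hsur', hget'⟩ := h'
  rcases eq_or_ne X' [] with rfl | hX'ne
  · have hY' : Y' = [] := by
      cases Y' with
      | nil => rfl
      | cons y ys => exact absurd (hget' 0 (by simp)).choose (by simp)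
    subst hY'
    rw [combine_nil_right, List.append_nil]
    exact ⟨hc, f, h0, hstep, hsur, hget⟩
  rcases eq_or_ne X [] with rfl | hXne
  · have hY : Y = [] := by
      cases Y with
      | nil => rfl
      | cons y ys => exact absurd (hget 0 (by simp)).choose (by simp)
    subst hY
    rw [combine_nil_left, List.nil_append]
    exact ⟨hc', f', h0', hstep', hsur', hget'⟩
  have hm : 0 < X.length := List.length_pos_iff.mpr hXne
  have hm' : 0 < X'.length := List.length_pos_iff.mpr hX'ne
  have hn : 0 < Y.length := by
    obtain ⟨k0, hk0, -⟩ := hsur 0 hm; omega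
  have hn' : 0 < Y'.length := by
    obtain ⟨k0, hk0, -⟩ := hsur' 0 hm'; omega
  have hb : ∀ k < Y.length, f k < X.length := fun k hk => (hget k hk).choose
  have hb' : ∀ k < Y'.length, f' k < X'.length := fun k hk => (hget' k hk).choose
  have hlast : f (Y.length - 1) = X.length - 1 := natstep_last f hstep hsur hb hn hm
  rw [combine_of_ne_nil X X' hXne hX'ne]
  split_ifs with hab
  · -- merge case
    have hsplit := List.isChain_append.mp
      (show List.Chain' (· ≠ ·) (X.dropLast ++ [X.getLast hXne]) by
        rw [List.dropLast_append_getLast hXne]; exact hc)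
    refine ⟨?_, fun k => if k < Y.length then f k else X.length - 1 + f' (k - Y.length),
      ?_, ?_, ?_, ?_⟩
    · refine List.isChain_append.mpr ⟨hsplit.1, hc', ?_⟩
      intro x hx y hy
      rw [List.head?_eq_head hX'ne] at hy
      simp only [Option.mem_some_iff] at hy
      subst hy
      rw [← hab]
      exact hsplit.2.2 x hx _ (by simp)
    · beta_reduce
      rw [if_pos hn]; exact h0
    · intro k hk
      beta_reduce
      rw [List.length_append] at hk
      by_cases h1 : k + 1 < Y.length
      · simp only [if_pos h1, if_pos (Nat.lt_of_succ_lt h1)]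
        exact hstep k h1
      by_cases h2 : k + 1 = Y.length
      · left
        rw [if_neg (by omega), if_pos (by omega),
          show k + 1 - Y.length = 0 by omega, h0',
          show k = Y.length - 1 by omega, hlast]
        omega
      · rw [if_neg (by omega), if_neg (by omega),
          show k + 1 - Y.length = k - Y.length + 1 by omega]
        rcases hstep' (k - Y.length) (by omega) with h3 | h3 <;> [left; right] <;> omega
    · intro j hj
      beta_reduce
      simp only [List.length_append, List.length_dropLast] at hj
      by_cases h1 : j < X.length - 1
      · obtain ⟨k, hk, hfk⟩ := hsur j (by omega)
        exact ⟨k, by rw [List.length_append]; omega, by rw [if_pos hk]; exact hfk⟩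
      · obtain ⟨k', hk', hfk'⟩ := hsur' (j - (X.length - 1)) (by omega)
        refine ⟨Y.length + k', by rw [List.length_append]; omega, ?_⟩
        beta_reduce
        rw [if_neg (by omega), show Y.length + k' - Y.length = k' by omega, hfk']
        omega
    · intro k hk
      beta_reduce
      rw [List.length_append] at hk
      by_cases h1 : k < Y.length
      · simp only [if_pos h1]
        obtain ⟨hfk, hYk⟩ := hget k h1
        refine ⟨by simp only [List.length_append, List.length_dropLast]; omega, ?_⟩
        rw [List.getElem_append_left h1, hYk]
        by_cases h2 : f k < X.length - 1
        · rw [List.getElem_append_left (by simp only [List.length_dropLast]; omega),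
            List.getElem_dropLast]
        · have e : f k = X.length - 1 := by omega
          simp only [e]
          rw [List.getElem_append_right (by simp only [List.length_dropLast]; omega)]
          simp only [List.length_dropLast, Nat.sub_self]
          rw [← List.getLast_eq_getElem hXne, ← List.head_eq_getElem hX'ne]
          exact hab
      · simp only [if_neg h1]
        obtain ⟨hfk', hY'k⟩ := hget' (k - Y.length) (by omega)
        refine ⟨by simp only [List.length_append, List.length_dropLast]; omega, ?_⟩
        rw [List.getElem_append_right (le_of_not_gt h1), hY'k,
          List.getElem_append_right (by simp only [List.length_dropLast]; omega)]
        simp only [List.length_dropLast, Nat.add_sub_cancel_left]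
  · -- no-merge case
    refine ⟨?_, fun k => if k < Y.length then f k else X.length + f' (k - Y.length),
      ?_, ?_, ?_, ?_⟩
    · refine List.isChain_append.mpr ⟨hc, hc', ?_⟩
      intro x hx y hy
      rw [List.getLast?_eq_getLast hXne] at hx
      rw [List.head?_eq_head hX'ne] at hy
      simp only [Option.mem_some_iff] at hx hy
      subst hx; subst hy
      exact hab
    · beta_reduce
      rw [if_pos hn]; exact h0
    · intro k hk
      beta_reduce
      rw [List.length_append] at hk
      by_cases h1 : k + 1 < Y.length
      · simp only [if_pos h1, if_pos (Nat.lt_of_succ_lt h1)]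
        exact hstep k h1
      by_cases h2 : k + 1 = Y.length
      · right
        rw [if_neg (by omega), if_pos (by omega),
          show k + 1 - Y.length = 0 by omega, h0',
          show k = Y.length - 1 by omega, hlast]
        omega
      · rw [if_neg (by omega), if_neg (by omega),
          show k + 1 - Y.length = k - Y.length + 1 by omega]
        rcases hstep' (k - Y.length) (by omega) with h3 | h3 <;> [left; right] <;> omega
    · intro j hj
      beta_reduce
      rw [List.length_append] at hj
      by_cases h1 : j < X.length
      · obtain ⟨k, hk, hfk⟩ := hsur j h1
        exact ⟨k, by rw [List.length_append]; omega, by rw [if_pos hk]; exact hfk⟩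
      · obtain ⟨k', hk', hfk'⟩ := hsur' (j - X.length) (by omega)
        refine ⟨Y.length + k', by rw [List.length_append]; omega, ?_⟩
        beta_reduce
        rw [if_neg (by omega), show Y.length + k' - Y.length = k' by omega, hfk']
        omega
    · intro k hk
      beta_reduce
      rw [List.length_append] at hk
      by_cases h1 : k < Y.length
      · simp only [if_pos h1]
        obtain ⟨hfk, hYk⟩ := hget k h1
        refine ⟨by rw [List.length_append]; omega, ?_⟩
        rw [List.getElem_append_left h1, hYk, List.getElem_append_left hfk]
      · simp only [if_neg h1]
        obtain ⟨hfk', hY'k⟩ := hget' (k - Y.length) (by omega)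
        refine ⟨by rw [List.length_append]; omega, ?_⟩
        rw [List.getElem_append_right (le_of_not_gt h1), hY'k,
          List.getElem_append_right (by omega)]
        simp only [Nat.add_sub_cancel_left]
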